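/- There exists a strictly increasing sequence of integers λ_0, λ_1, λ_2, … with λ_0 = −2, λ_1 = 2, and λ_{i+1} > λ_i + 1 for all i ≥ 0, such that for every integer m ≥ 1 and every integer t, C(t, m) + 3·C(t, m−1) = Σ_{i=0}^{m−1} C(t − λ_i, m−i) + 1, where C(x, j) denotes the generalized binomial coefficient C(x, j) = x(x−1)⋯(x−j+1)/j! for an integer x and a natural number j. -/

import Mathlib

open Finset

/-- The set of vertices of the Johnson graph `J(n,m)`: the `m`-element subsets of
`[n] = {0, …, n-1}`. -/
def johnsonVerts (n m : ℕ) : Finset (Finset ℕ) :=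
  (Finset.range n).powersetCard m

/-- The (vertex) boundary of a set `S` of vertices in the Johnson graph `J(n,m)`:
the vertices outside `S` whose symmetric difference with some member of `S` has
cardinality `2`. -/
def boundary (n m : ℕ) (S : Finset (Finset ℕ)) : Finset (Finset ℕ) :=
  (johnsonVerts n m).filter fun y => y ∉ S ∧ ∃ x ∈ S, (symmDiff x y).card = 2

/-- The ball of a set `S` of vertices in the Johnson graph `J(n,m)`. -/
def ball (n m : ℕ) (S : Finset (Finset ℕ)) : Finset (Finset ℕ) :=
  S ∪ boundary n m S

/-- The initial segment of length `k` in the colex order on `m`-element subsets of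
`[n]`: the `m`-subsets `s` such that fewer than `k` of the `m`-subsets are
colex-smaller than `s`. -/
def colexInitSeg (n m k : ℕ) : Finset (Finset ℕ) :=
  (johnsonVerts n m).filter fun s =>
    ((johnsonVerts n m).filter fun t =>
      toColex t < toColex s).card < k

/-- The isoperimetric function `μ_{n,m}(k)` of the Johnson graph `J(n,m)`:
the smallest boundary cardinality among sets of `k` vertices. -/
noncomputable def mu (n m k : ℕ) : ℕ :=
  sInf {b | ∃ S : Finset (Finset ℕ),
    S ⊆ johnsonVerts n m ∧ S.card = k ∧ (boundary n m S).card = b}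

/-- The lower shadow of a family `S` of `m`-element subsets of `[n]`:
the `(m-1)`-subsets contained in some member of `S`. -/
def lowShadow (n m : ℕ) (S : Finset (Finset ℕ)) : Finset (Finset ℕ) :=
  ((Finset.range n).powersetCard (m - 1)).filter fun t => ∃ s ∈ S, t ⊆ s

/-- The upper shadow of a family `S` of `c`-element subsets of `[n]`:
the `(c+1)`-subsets of `[n]` containing some member of `S`. -/
def upShadow' (n c : ℕ) (S : Finset (Finset ℕ)) : Finset (Finset ℕ) :=
  ((Finset.range n).powersetCard (c + 1)).filter fun t => ∃ s ∈ S, s ⊆ t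

/-- The shift `T_{ij}` applied to a single set `x` of the family `S`. -/
def shiftFun (i j : ℕ) (S : Finset (Finset ℕ)) (x : Finset ℕ) : Finset ℕ :=
  if i ∈ x ∧ j ∉ x ∧ insert j (x.erase i) ∉ S then insert j (x.erase i) else x

/-- The shift `T_{ij}(S)` of a family `S`. -/
def shift (i j : ℕ) (S : Finset (Finset ℕ)) : Finset (Finset ℕ) :=
  S.image (shiftFun i j S)

/-- `ks 0 > ks 1 > ⋯ > ks r ≥ m - r > 0` and `k = ∑_{i=0}^{r} C(ks i, m - i)`:
the `m`-binomial representation of `k`. -/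
def IsMBinomialRep (m k r : ℕ) (ks : ℕ → ℕ) : Prop :=
  (∀ i < r, ks (i + 1) < ks i) ∧ m - r ≤ ks r ∧ r < m ∧
    k = ∑ i ∈ Finset.range (r + 1), (ks i).choose (m - i)

/-- The function `f(k,n,m)` computed from the `m`-binomial representation
`k = ∑_{i=0}^{r} C(ks i, m - i)`:
`f = C(ks 0, m-1)·(n - ks 0) + ∑_{i=1}^{r} (C(ks i, m-i-1)·(n - ks 0 - 1) - C(ks i, m-i))`. -/
def fVal (n m r : ℕ) (ks : ℕ → ℕ) : ℤ :=
  ((ks 0).choose (m - 1) : ℤ) * ((n : ℤ) - ks 0) +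
    ∑ i ∈ Finset.Icc 1 r,
      (((ks i).choose (m - i - 1) : ℤ) * ((n : ℤ) - ks 0 - 1) - ((ks i).choose (m - i) : ℤ))

/-- The generalized binomial coefficient `C(x, j) = x(x-1)⋯(x-j+1)/j!` for an
integer `x` (the division is exact). -/
def genChoose (x : ℤ) (j : ℕ) : ℤ :=
  (∏ i ∈ Finset.range j, (x - i)) / (j.factorial : ℤ)

namespace GC

def prodR (x : ℤ) (k : ℕ) : ℤ := ∏ i ∈ Finset.range k, (x - i)

lemma prodR_succ (x : ℤ) (k : ℕ) : prodR x (k+1) = prodR x k * (x - k) := by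
  simp [prodR, Finset.prod_range_succ]

lemma prodR_shift (x : ℤ) (k : ℕ) : prodR x (k+1) = x * prodR (x-1) k := by
  rw [prodR, prodR, Finset.prod_range_succ']
  rw [mul_comm]
  simp only [Nat.cast_zero, sub_zero]
  congr 1
  apply Finset.prod_congr rfl
  intro i _
  push_cast
  ring

lemma prodR_cast (n k : ℕ) (h : k ≤ n) : prodR (n : ℤ) k = (n.descFactorial k : ℤ) := by
  rw [Nat.descFactorial_eq_prod_range]
  push_cast
  apply Finset.prod_congr rfl
  intro i hi
  have : i ≤ n := le_trans (le_of_lt (Finset.mem_range.mp hi)) h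
  omega

lemma prodR_zero_of (x : ℤ) (k : ℕ) (h0 : 0 ≤ x) (h1 : x < k) : prodR x k = 0 := by
  apply Finset.prod_eq_zero (i := x.toNat)
  · simp only [Finset.mem_range]; omega
  · simp [Int.toNat_of_nonneg h0]

lemma prodR_neg (x : ℤ) (k : ℕ) : prodR (-x) k = (-1)^k * prodR (x + k - 1) k := by
  rw [prodR, prodR]
  rw [← Finset.prod_range_reflect (fun i => (x + k - 1 - i)) k]
  have hcard : ((-1:ℤ))^k = ∏ _i ∈ Finset.range k, (-1 : ℤ) := by
    simp
  rw [hcard, ← Finset.prod_mul_distrib]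
  apply Finset.prod_congr rfl
  intro i hi
  have hik : i < k := Finset.mem_range.mp hi
  have : ((k - 1 - i : ℕ) : ℤ) = (k:ℤ) - 1 - i := by
    push_cast [Nat.cast_sub (by omega : i ≤ k - 1), Nat.cast_sub (by omega : 1 ≤ k)]
    ring
  rw [this]
  ring

lemma fact_dvd_prodR (x : ℤ) (k : ℕ) : (k.factorial : ℤ) ∣ prodR x k := by
  rcases le_or_gt 0 x with h | h
  · lift x to ℕ using h
    rcases le_or_gt k x with h1 | h1
    · rw [prodR_cast _ _ h1]
      exact_mod_cast Int.natCast_dvd_natCast.mpr (Nat.factorial_dvd_descFactorial _ _)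
    · rw [prodR_zero_of _ _ (by positivity) (by exact_mod_cast h1)]
      exact dvd_zero _
  · have hx : (-x) + k - 1 ≥ 0 := by omega
    have : prodR x k = (-1)^k * prodR ((-x) + k - 1) k := by
      have := prodR_neg (-x) k
      simpa using this
    rw [this]
    apply Dvd.dvd.mul_left
    lift ((-x) + k - 1) to ℕ using hx with n hn
    rcases le_or_gt k n with h1 | h1
    · rw [prodR_cast _ _ h1]
      exact_mod_cast Int.natCast_dvd_natCast.mpr (Nat.factorial_dvd_descFactorial _ _)
    · rw [prodR_zero_of _ _ (by positivity) (by exact_mod_cast h1)]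
      exact dvd_zero _

lemma gc_def (x : ℤ) (k : ℕ) : genChoose x k = prodR x k / (k.factorial : ℤ) := rfl

@[simp] lemma gc_zero (x : ℤ) : genChoose x 0 = 1 := by simp [genChoose]

@[simp] lemma gc_one (x : ℤ) : genChoose x 1 = x := by
  simp [genChoose, Nat.factorial]

lemma gc_cast (n k : ℕ) : genChoose (n : ℤ) k = (n.choose k : ℤ) := by
  rw [gc_def]
  rcases le_or_gt k n with h | h
  · rw [prodR_cast _ _ h, Nat.descFactorial_eq_factorial_mul_choose]
    push_cast
    rw [Int.mul_ediv_cancel_left]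
    exact_mod_cast Nat.factorial_ne_zero k
  · rw [prodR_zero_of _ _ (by positivity) (by exact_mod_cast h), Nat.choose_eq_zero_of_lt h]
    simp

lemma gc_neg (x : ℤ) (k : ℕ) : genChoose (-x) k = (-1)^k * genChoose (x + k - 1) k := by
  rw [gc_def, gc_def, prodR_neg, Int.mul_ediv_assoc _ (fact_dvd_prodR _ _)]

lemma gc_pascal (x : ℤ) (k : ℕ) :
    genChoose x (k+1) = genChoose (x-1) (k+1) + genChoose (x-1) k := by
  have key : prodR x (k+1) = prodR (x-1) (k+1) + (k+1) * prodR (x-1) k := by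
    rw [prodR_shift, prodR_succ]
    ring
  rw [gc_def, gc_def, gc_def, key, Int.add_ediv_of_dvd_left (fact_dvd_prodR _ _)]
  congr 1
  have : ((k+1).factorial : ℤ) = ((k:ℤ)+1) * (k.factorial : ℤ) := by
    push_cast [Nat.factorial_succ]; ring
  rw [this, Int.mul_ediv_mul_of_pos _ _ (by positivity)]

lemma gc_zero_left (k : ℕ) : genChoose 0 (k+1) = 0 := by
  rw [gc_def, prodR_zero_of _ _ le_rfl (by positivity)]
  simp

lemma gc_nonneg {x : ℤ} (h : 0 ≤ x) (k : ℕ) : 0 ≤ genChoose x k := by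
  lift x to ℕ using h
  rw [gc_cast]
  positivity

lemma gc_two (x : ℤ) : 2 * genChoose x 2 = x * (x - 1) := by
  have : prodR x 2 = x * (x-1) := by simp [prodR, Finset.prod_range_succ]
  rw [gc_def]
  have hd := fact_dvd_prodR x 2
  have h2 : (Nat.factorial 2 : ℤ) = 2 := by norm_num [Nat.factorial]
  rw [h2] at hd ⊢
  rw [← this, Int.mul_ediv_cancel' hd]

lemma gc_three (x : ℤ) : 6 * genChoose x 3 = x * (x - 1) * (x - 2) := by
  have : prodR x 3 = x * (x-1) * (x-2) := by
    simp [prodR, Finset.prod_range_succ]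
  rw [gc_def]
  have hd := fact_dvd_prodR x 3
  have h6 : (Nat.factorial 3 : ℤ) = 6 := by norm_num [Nat.factorial]
  rw [h6] at hd ⊢
  rw [← this, Int.mul_ediv_cancel' hd]

lemma gc_mono {a b : ℤ} (ha : 0 ≤ a) (h : a ≤ b) (k : ℕ) : genChoose a k ≤ genChoose b k := by
  have hb : 0 ≤ b := le_trans ha h
  lift a to ℕ using ha
  lift b to ℕ using hb
  rw [gc_cast, gc_cast]
  exact_mod_cast Nat.choose_le_choose k (by exact_mod_cast h)


/-- `lamSeq M n` equals `lam n` for `n ≤ M`. -/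
def lamSeq : ℕ → ℕ → ℤ
  | 0 => fun _ => -2
  | (M+1) => fun n =>
      if n = M + 1 then
        1 + ∑ i ∈ Finset.range (M+1), genChoose (-(lamSeq M i)) (M+2-i)
      else lamSeq M n

def lam (n : ℕ) : ℤ := lamSeq n n

lemma lamSeq_stable (M n : ℕ) (h : n ≤ M) : lamSeq M n = lam n := by
  induction M with
  | zero => interval_cases n; rfl
  | succ M ih =>
      rcases Nat.lt_or_ge n (M+1) with h1 | h1
      · show lamSeq (M+1) n = lam n
        rw [lamSeq]
        simp only [if_neg (by omega : ¬ n = M+1)]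
        exact ih (by omega)
      · have : n = M+1 := by omega
        subst this; rfl

@[simp] lemma lam_zero : lam 0 = -2 := rfl

lemma lam_succ (M : ℕ) :
    lam (M+1) = 1 + ∑ i ∈ Finset.range (M+1), genChoose (-(lam i)) (M+2-i) := by
  show lamSeq (M+1) (M+1) = _
  rw [lamSeq]
  simp only [eq_self_iff_true, if_true]
  congr 1
  apply Finset.sum_congr rfl
  intro i hi
  rw [lamSeq_stable M i (by simpa using Nat.lt_succ_iff.mp (Finset.mem_range.mp hi))]

-- helper to evaluate genChoose(-(n:ℤ)) k  for nat n ≥ 1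
lemma gc_neg_nat (n k : ℕ) (h : 1 ≤ n) :
    genChoose (-(n:ℤ)) k = (-1)^k * ((n + k - 1).choose k : ℤ) := by
  rw [gc_neg]
  congr 1
  have : ((n:ℤ) + k - 1) = ((n + k - 1 : ℕ) : ℤ) := by push_cast [Nat.cast_sub (by omega : 1 ≤ n + k)]; ring
  rw [this, gc_cast]

lemma gcn (n k c : ℕ) (h1 : 1 ≤ n) (h2 : (n+k-1).choose k = c) :
    genChoose (-(n:ℤ)) k = (-1)^k * (c:ℤ) := by
  rw [gc_neg_nat n k h1, h2]

lemma gcp (n k c : ℕ) (h2 : n.choose k = c) : genChoose ((n:ℤ)) k = (c:ℤ) := by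
  rw [gc_cast, h2]

lemma lam_one : lam 1 = 2 := by
  rw [lam_succ, Finset.sum_range_succ, Finset.sum_range_zero, lam_zero]
  rw [show (-(-2:ℤ)) = ((2:ℕ):ℤ) by norm_num, gcp 2 2 1 (by decide)]
  norm_num

lemma lam_two : lam 2 = 4 := by
  rw [lam_succ]
  rw [Finset.sum_range_succ, Finset.sum_range_succ, Finset.sum_range_zero]
  rw [lam_zero, lam_one]
  rw [show (-(-2:ℤ)) = ((2:ℕ):ℤ) by norm_num, gcp 2 3 0 (by decide)]
  rw [show (-(2:ℤ)) = -((2:ℕ):ℤ) by norm_num, gcn 2 2 3 (by norm_num) (by decide)]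
  norm_num

lemma lam_three : lam 3 = 7 := by
  rw [lam_succ]
  rw [Finset.sum_range_succ, Finset.sum_range_succ, Finset.sum_range_succ, Finset.sum_range_zero]
  rw [lam_zero, lam_one, lam_two]
  rw [show (-(-2:ℤ)) = ((2:ℕ):ℤ) by norm_num, gcp 2 4 0 (by decide)]
  rw [show (-(2:ℤ)) = -((2:ℕ):ℤ) by norm_num, gcn 2 3 4 (by norm_num) (by decide)]
  rw [show (-(4:ℤ)) = -((4:ℕ):ℤ) by norm_num, gcn 4 2 10 (by norm_num) (by decide)]
  norm_num

lemma lam_four : lam 4 = 14 := by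
  rw [lam_succ]
  rw [Finset.sum_range_succ, Finset.sum_range_succ, Finset.sum_range_succ,
    Finset.sum_range_succ, Finset.sum_range_zero]
  rw [lam_zero, lam_one, lam_two, lam_three]
  rw [show (-(-2:ℤ)) = ((2:ℕ):ℤ) by norm_num, gcp 2 5 0 (by decide)]
  rw [show (-(2:ℤ)) = -((2:ℕ):ℤ) by norm_num, gcn 2 4 5 (by norm_num) (by decide)]
  rw [show (-(4:ℤ)) = -((4:ℕ):ℤ) by norm_num, gcn 4 3 20 (by norm_num) (by decide)]
  rw [show (-(7:ℤ)) = -((7:ℕ):ℤ) by norm_num, gcn 7 2 28 (by norm_num) (by decide)]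
  norm_num

lemma lam_five : lam 5 = 51 := by
  rw [lam_succ]
  rw [Finset.sum_range_succ, Finset.sum_range_succ, Finset.sum_range_succ,
    Finset.sum_range_succ, Finset.sum_range_succ, Finset.sum_range_zero]
  rw [lam_zero, lam_one, lam_two, lam_three, lam_four]
  rw [show (-(-2:ℤ)) = ((2:ℕ):ℤ) by norm_num, gcp 2 6 0 (by decide)]
  rw [show (-(2:ℤ)) = -((2:ℕ):ℤ) by norm_num, gcn 2 5 6 (by norm_num) (by decide)]
  rw [show (-(4:ℤ)) = -((4:ℕ):ℤ) by norm_num, gcn 4 4 35 (by norm_num) (by decide)]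
  rw [show (-(7:ℤ)) = -((7:ℕ):ℤ) by norm_num, gcn 7 3 84 (by norm_num) (by decide)]
  rw [show (-(14:ℤ)) = -((14:ℕ):ℤ) by norm_num, gcn 14 2 105 (by norm_num) (by decide)]
  norm_num

lemma lam_six : lam 6 = 928 := by
  rw [lam_succ]
  rw [Finset.sum_range_succ, Finset.sum_range_succ, Finset.sum_range_succ,
    Finset.sum_range_succ, Finset.sum_range_succ, Finset.sum_range_succ, Finset.sum_range_zero]
  rw [lam_zero, lam_one, lam_two, lam_three, lam_four, lam_five]
  rw [show (-(-2:ℤ)) = ((2:ℕ):ℤ) by norm_num, gcp 2 7 0 (by decide)]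
  rw [show (-(2:ℤ)) = -((2:ℕ):ℤ) by norm_num, gcn 2 6 7 (by norm_num) (by decide)]
  rw [show (-(4:ℤ)) = -((4:ℕ):ℤ) by norm_num, gcn 4 5 56 (by norm_num) (by decide)]
  rw [show (-(7:ℤ)) = -((7:ℕ):ℤ) by norm_num, gcn 7 4 210 (by norm_num) (by decide)]
  rw [show (-(14:ℤ)) = -((14:ℕ):ℤ) by norm_num, gcn 14 3 560 (by norm_num) (by decide)]
  rw [show (-(51:ℤ)) = -((51:ℕ):ℤ) by norm_num, gcn 51 2 1326 (by norm_num) (by decide)]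
  norm_num


/-- difference form of pascal -/
lemma gc_diff (x : ℤ) (k : ℕ) :
    genChoose x (k+1) - genChoose (x-1) (k+1) = genChoose (x-1) k := by
  rw [gc_pascal]; ring

def Idt (m : ℕ) (t : ℤ) : Prop :=
  genChoose t m + 3 * genChoose t (m - 1) =
    (∑ i ∈ Finset.range m, genChoose (t - lam i) (m - i)) + 1

lemma idt_step (m : ℕ) (hm : 1 ≤ m) (ih : ∀ s : ℤ, Idt m s) (t : ℤ) :
    Idt (m+1) t ↔ Idt (m+1) (t-1) := by
  have key : (genChoose t (m+1) + 3 * genChoose t ((m+1) - 1))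
      - (genChoose (t-1) (m+1) + 3 * genChoose (t-1) ((m+1) - 1))
      = (∑ i ∈ Finset.range (m+1), genChoose (t - lam i) ((m+1) - i))
        - (∑ i ∈ Finset.range (m+1), genChoose ((t-1) - lam i) ((m+1) - i)) := by
    have hL : (genChoose t (m+1) + 3 * genChoose t ((m+1) - 1))
        - (genChoose (t-1) (m+1) + 3 * genChoose (t-1) ((m+1) - 1))
        = genChoose (t-1) m + 3 * genChoose (t-1) (m-1) := by
      have h1 := gc_diff t m
      obtain ⟨m', rfl⟩ : ∃ m', m = m' + 1 := ⟨m - 1, by omega⟩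
      have h2 := gc_diff t m'
      simp only [Nat.add_sub_cancel] at *
      linarith
    have hR : (∑ i ∈ Finset.range (m+1), genChoose (t - lam i) ((m+1) - i))
        - (∑ i ∈ Finset.range (m+1), genChoose ((t-1) - lam i) ((m+1) - i))
        = (∑ i ∈ Finset.range m, genChoose ((t-1) - lam i) (m - i)) + 1 := by
      rw [← Finset.sum_sub_distrib]
      rw [Finset.sum_range_succ]
      have hlast : genChoose (t - lam m) ((m+1) - m) - genChoose ((t-1) - lam m) ((m+1) - m)
          = 1 := by
        have : (m+1) - m = 1 := by omega
        rw [this]; simp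
      rw [hlast]
      congr 1
      apply Finset.sum_congr rfl
      intro i hi
      have him : i < m := Finset.mem_range.mp hi
      have h1 : (m+1) - i = (m - i) + 1 := by omega
      rw [h1]
      have := gc_diff (t - lam i) (m - i)
      rw [show t - lam i - 1 = (t - 1) - lam i by ring] at this
      linarith
    have hIH := ih (t-1)
    unfold Idt at hIH
    rw [hL, hR]
    linarith
  unfold Idt
  constructor <;> intro h <;> linarith [key]

lemma idt_zero (m : ℕ) (hm : 1 ≤ m) : Idt m 0 := by
  obtain ⟨M, rfl⟩ : ∃ M, m = M + 1 := ⟨m - 1, by omega⟩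
  unfold Idt
  rcases Nat.eq_zero_or_pos M with h | h
  · subst h
    simp [lam_zero]
  · obtain ⟨M', rfl⟩ : ∃ M', M = M' + 1 := ⟨M - 1, by omega⟩
    have hL1 : genChoose (0:ℤ) (M'+1+1) = 0 := gc_zero_left (M'+1)
    have hL2 : genChoose (0:ℤ) ((M'+1+1) - 1) = 0 := by
      have : (M'+1+1) - 1 = M' + 1 := by omega
      rw [this]; exact gc_zero_left M'
    have h1 : ∑ i ∈ Finset.range (M'+1), genChoose (0 - lam i) ((M'+1+1) - i)
        = lam (M'+1) - 1 := by
      have he : ∀ i ∈ Finset.range (M'+1),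
          genChoose (0 - lam i) ((M'+1+1) - i) = genChoose (-(lam i)) (M'+2-i) := by
        intro i hi
        have harg : (M'+1+1) - i = M'+2 - i := by omega
        rw [harg, show (0:ℤ) - lam i = -(lam i) by ring]
      rw [Finset.sum_congr rfl he, lam_succ M']
      ring
    have h2 : genChoose (0 - lam (M'+1)) ((M'+1+1) - (M'+1)) = - lam (M'+1) := by
      have : (M'+1+1) - (M'+1) = 1 := by omega
      rw [this]; simp
    rw [Finset.sum_range_succ, h1, h2, hL1, hL2]
    ring

theorem main_identity : ∀ m : ℕ, 1 ≤ m → ∀ t : ℤ, Idt m t := by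
  intro m hm
  induction m with
  | zero => omega
  | succ M ihM =>
      rcases Nat.eq_zero_or_pos M with h | h
      · subst h
        intro t
        unfold Idt
        simp [lam_zero]
        ring
      · have ihAll : ∀ s : ℤ, Idt M s := ihM h
        intro t
        induction t using Int.induction_on with
        | zero => exact idt_zero (M+1) (by omega)
        | succ i hi =>
            have := idt_step M h ihAll ((i:ℤ)+1)
            simp only [add_sub_cancel_right] at this
            exact this.mpr hi
        | pred i hi =>
            exact (idt_step M h ihAll (-(i:ℤ))).mp hi


noncomputable def Cc (i k : ℕ) : ℤ := genChoose (lam i + (k:ℤ) - i - 1) (k - i)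

noncomputable def ee (m k : ℕ) : ℤ := ∑ i ∈ Finset.range m, (-1:ℤ)^(m+i+1) * Cc i k

lemma ee_succ (m k : ℕ) : ee (m+1) k = Cc m k - ee m k := by
  rw [ee, ee, Finset.sum_range_succ]
  have h1 : ∀ i ∈ Finset.range m,
      (-1:ℤ)^(m+1+i+1) * Cc i k = -((-1:ℤ)^(m+i+1) * Cc i k) := by
    intro i _
    have : m+1+i+1 = (m+i+1)+1 := by omega
    rw [this, pow_succ]
    ring
  rw [Finset.sum_congr rfl h1]
  have h2 : (-1:ℤ)^(m+1+m+1) = 1 := by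
    have : m+1+m+1 = 2*(m+1) := by omega
    rw [this, pow_mul]
    norm_num
  rw [h2, Finset.sum_neg_distrib]
  ring

lemma gc_neg_cc (i k : ℕ) (hik : i ≤ k) :
    genChoose (-(lam i)) (k-i) = (-1)^(k-i) * Cc i k := by
  rw [gc_neg, Cc]
  congr 2
  push_cast [Nat.cast_sub hik]
  ring

lemma ee_diag_succ (M : ℕ) : ee (M+1) (M+2) = lam (M+1) - 1 := by
  have key : ∀ i ∈ Finset.range (M+1),
      (-1:ℤ)^(M+1+i+1) * Cc i (M+2) = genChoose (-(lam i)) (M+2-i) := by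
    intro i hi
    have hi' : i < M+1 := Finset.mem_range.mp hi
    rw [gc_neg_cc i (M+2) (by omega)]
    have hs : (-1:ℤ)^(M+1+i+1) = (-1:ℤ)^(M+2-i) := by
      rw [show M+1+i+1 = (M+2-i) + 2*i from by omega, pow_add, pow_mul]
      norm_num
    rw [hs]
  rw [ee, Finset.sum_congr rfl key, lam_succ M]
  ring

/-- the key ratio lemma, ℕ version -/
lemma ratio_nat (a b : ℕ) (ha : 1 ≤ a) (hab : a ≤ b)
    (seed : (a+2).choose 3 ≤ (b+1).choose 2) :
    ∀ j, 2 ≤ j → (a+j).choose (j+1) ≤ (b+j-1).choose j := by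
  intro j hj
  induction j with
  | zero => omega
  | succ j ih =>
      rcases Nat.lt_or_ge j 2 with h2 | h2
      · -- j+1 = 2, i.e. j = 1
        have : j = 1 := by omega
        subst this
        simpa using seed
      · have IH := ih h2
        -- X' * (j+1) = (b+j) * X, with X = (b+j-1).choose j
        have e1 : (b+j) * (b+j-1).choose j = (b+j).choose (j+1) * (j+1) := by
          have h := Nat.add_one_mul_choose_eq (b+j-1) j
          have hb : b + j - 1 + 1 = b + j := by omega
          rw [hb] at h
          exact h
        have e2 : (a+j+1) * (a+j).choose (j+1) = (a+j+1).choose (j+2) * (j+2) := by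
          have := Nat.add_one_mul_choose_eq (a+j) (j+1)
          simpa using this
        have cross : (a+j+1) * (j+1) ≤ (b+j) * (j+2) := by nlinarith
        have chain : (a+j+1).choose (j+2) * ((j+2) * (j+1))
            ≤ (b+j).choose (j+1) * ((j+1) * (j+2)) := by
          calc (a+j+1).choose (j+2) * ((j+2) * (j+1))
              = ((a+j+1).choose (j+2) * (j+2)) * (j+1) := by ring
            _ = ((a+j+1) * (a+j).choose (j+1)) * (j+1) := by rw [← e2]
            _ ≤ ((b+j) * (b+j-1).choose j) * (j+2) := by
                calc ((a+j+1) * (a+j).choose (j+1)) * (j+1)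
                    = ((a+j+1) * (j+1)) * (a+j).choose (j+1) := by ring
                  _ ≤ ((b+j) * (j+2)) * (b+j-1).choose j :=
                      Nat.mul_le_mul cross IH
                  _ = ((b+j) * (b+j-1).choose j) * (j+2) := by ring
            _ = (b+j).choose (j+1) * ((j+1) * (j+2)) := by rw [e1]; ring
        have hpos : 0 < (j+1) * (j+2) := by positivity
        have := Nat.le_of_mul_le_mul_right (by
          calc (a+j+1).choose (j+2) * ((j+1) * (j+2))
              = (a+j+1).choose (j+2) * ((j+2) * (j+1)) := by ring
            _ ≤ (b+j).choose (j+1) * ((j+1) * (j+2)) := chain) hpos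
        have hb : b + (j+1) - 1 = b + j := by omega
        have ha2 : a + (j+1) = a + j + 1 := by omega
        rw [hb, ha2]
        exact this

/-- ratio lemma, ℤ version -/
lemma gc_ratio {A B : ℤ} (hA : 1 ≤ A) (hAB : A ≤ B)
    (seed : genChoose (A+2) 3 ≤ genChoose (B+1) 2) (j : ℕ) (hj : 2 ≤ j) :
    genChoose (A + j) (j+1) ≤ genChoose (B + j - 1) j := by
  lift A to ℕ using (by omega : (0:ℤ) ≤ A)
  lift B to ℕ using (by omega : (0:ℤ) ≤ B)
  have ha : 1 ≤ A := by exact_mod_cast hA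
  have hab : A ≤ B := by exact_mod_cast hAB
  have seed' : (A+2).choose 3 ≤ (B+1).choose 2 := by
    have e1 : ((A:ℤ)+2) = ((A+2:ℕ):ℤ) := by push_cast; ring
    have e2 : ((B:ℤ)+1) = ((B+1:ℕ):ℤ) := by push_cast; ring
    rw [e1, e2, gc_cast, gc_cast] at seed
    exact_mod_cast seed
  have := ratio_nat A B ha hab seed' j hj
  have e1 : ((A:ℤ) + j) = ((A+j:ℕ):ℤ) := by push_cast; ring
  have e2 : ((B:ℤ) + j - 1) = ((B+j-1:ℕ):ℤ) := by
    push_cast [Nat.cast_sub (by omega : 1 ≤ B + j)]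
    ring
  rw [e1, e2, gc_cast, gc_cast]
  exact_mod_cast this

def Pp (m : ℕ) : Prop := ∀ k, m+1 ≤ k → 0 ≤ ee m k ∧ ee m k ≤ Cc m k

lemma Cc_shape1 (m k : ℕ) (h : m+3 ≤ k) :
    Cc m k = genChoose (lam m + ((k - m - 1 : ℕ):ℤ)) ((k-m-1)+1) := by
  rw [Cc]
  have hc : ((k - m - 1 : ℕ):ℤ) = (k:ℤ) - m - 1 := by omega
  have hk : (k-m-1)+1 = k - m := by omega
  rw [hc, hk]
  congr 1
  ring

lemma Cc_shape2 (m k : ℕ) (h : m+3 ≤ k) :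
    Cc (m+1) k = genChoose (lam (m+1) + ((k - m - 1 : ℕ):ℤ) - 1) (k-m-1) := by
  rw [Cc]
  have hc : ((k - m - 1 : ℕ):ℤ) = (k:ℤ) - m - 1 := by omega
  have hk : k - (m+1) = k - m - 1 := by omega
  rw [hc, hk]
  congr 1
  push_cast
  ring

/-- the inductive step for Pp -/
lemma Pp_step (m : ℕ) (hm : 1 ≤ m) (hP : Pp m)
    (h2 : 2 ≤ lam (m+1)) (hmono : 1 ≤ lam m) (hle : lam m ≤ lam (m+1))
    (seed : genChoose (lam m + 2) 3 ≤ genChoose (lam (m+1) + 1) 2) :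
    Pp (m+1) := by
  intro k hk
  rcases Nat.lt_or_ge k (m+3) with hk2 | hk2
  · -- k = m+2
    have : k = m+2 := by omega
    subst this
    rw [ee_diag_succ m]
    constructor
    · omega
    · rw [Cc]
      have : (m+2) - (m+1) = 1 := by omega
      rw [this]
      simp
      omega
  · obtain ⟨h1, h2'⟩ := hP k (by omega)
    rw [ee_succ]
    constructor
    · linarith
    · have hCc : Cc m k ≤ Cc (m+1) k := by
        rw [Cc_shape1 m k hk2, Cc_shape2 m k hk2]
        exact gc_ratio hmono hle seed (k-m-1) (by omega)
      linarith

/- numeric lemmas -/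
section Numeric
variable {p c n : ℤ}

lemma num_aux (hp : 14 ≤ p) (hc : p^2 ≤ 4*c) :
    49 ≤ c ∧ 7*((p+2)*(p+1)*p) ≤ 8*c^2 + 88*c := by
  have h49 : 49 ≤ c := by nlinarith
  have h7p : 7*p ≤ 2*c := by nlinarith
  have hp3 : (7*p)*(p^2) ≤ (2*c)*(4*c) :=
    mul_le_mul h7p hc (by positivity) (by linarith)
  exact ⟨h49, by nlinarith⟩

lemma num_n42 (hp : 14 ≤ p) (hc : p^2 ≤ 4*c)
    (hn : 1 + genChoose (c+1) 2 - genChoose (p+2) 3 ≤ n) :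
    13*c^2 - 67*c + 42 ≤ 42*n := by
  obtain ⟨h49, hP⟩ := num_aux hp hc
  have h2 := gc_two (c+1)
  have h3 := gc_three (p+2)
  nlinarith

lemma num1 (hp : 14 ≤ p) (hc : p^2 ≤ 4*c) :
    genChoose (p + 2) 3 < genChoose c 2 := by
  obtain ⟨h49, hP⟩ := num_aux hp hc
  have h2 := gc_two c
  have h3 := gc_three (p+2)
  nlinarith [mul_nonneg (by linarith : (0:ℤ) ≤ c - 49) (by linarith : (0:ℤ) ≤ c)]

lemma num3 (hp : 14 ≤ p) (hc : p^2 ≤ 4*c)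
    (hn : 1 + genChoose (c+1) 2 - genChoose (p+2) 3 ≤ n) :
    c^2 ≤ 4*n ∧ c + 2 ≤ n := by
  obtain ⟨h49, hP⟩ := num_aux hp hc
  have h42 := num_n42 hp hc hn
  constructor
  · nlinarith [mul_nonneg (by linarith : (0:ℤ) ≤ c - 49) (by linarith : (0:ℤ) ≤ c)]
  · nlinarith [mul_nonneg (by linarith : (0:ℤ) ≤ c - 49) (by linarith : (0:ℤ) ≤ c)]

lemma num2 (hp : 14 ≤ p) (hc : p^2 ≤ 4*c)
    (hn : 1 + genChoose (c+1) 2 - genChoose (p+2) 3 ≤ n) :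
    genChoose (c + 2) 3 ≤ genChoose (n+1) 2 := by
  obtain ⟨h49, hP⟩ := num_aux hp hc
  have h42 := num_n42 hp hc hn
  have h2' := gc_two (n+1)
  have h3' := gc_three (c+2)
  have hn0 : 0 ≤ 42*n := by nlinarith [mul_nonneg (by linarith : (0:ℤ) ≤ c - 49) (by linarith : (0:ℤ) ≤ c)]
  have hq : (13*c^2 - 67*c + 42)^2 ≤ (42*n)^2 := by
    apply sq_le_sq'
    · nlinarith [mul_nonneg (by linarith : (0:ℤ) ≤ c - 49) (by linarith : (0:ℤ) ≤ c)]
    · exact h42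
  -- 3*(13c²-67c+42)² ≥ 1764*(c+2)(c+1)c  and  (42n)² = 1764 n²
  have key : 1764 * ((c+2)*(c+1)*c) ≤ 3 * (42*n)^2 := by
    nlinarith [hq, mul_nonneg (mul_nonneg (by linarith : (0:ℤ) ≤ c - 49) (by linarith : (0:ℤ) ≤ c)) (by linarith : (0:ℤ) ≤ c), mul_nonneg (by linarith : (0:ℤ) ≤ c - 49) (by linarith : (0:ℤ) ≤ c), sq_nonneg (c - 49)]
  nlinarith [key, hn0]

end Numeric



lemma gc_eval (n k c : ℕ) (h : n.choose k = c) : genChoose ((n:ℤ)) k = (c:ℤ) := by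
  rw [gc_cast, h]

lemma Pp_one : Pp 1 := by
  intro k hk
  have hee : ee 1 k = genChoose ((k:ℤ) - 3) k := by
    rw [ee, Finset.sum_range_succ, Finset.sum_range_zero, Cc, lam_zero]
    norm_num
    congr 1
    ring
  have hCc : Cc 1 k = genChoose (k:ℤ) (k-1) := by
    rw [Cc, lam_one]
    congr 1
    ring
  rcases Nat.lt_or_ge k 3 with h3 | h3
  · have : k = 2 := by omega
    subst this
    constructor
    · rw [hee]
      norm_num
      rw [show (-1:ℤ) = -(1:ℤ) by norm_num, gc_neg]
      norm_num
      rw [show (2:ℤ) = ((2:ℕ):ℤ) by norm_num, gc_eval 2 2 1 (by decide)]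
      norm_num
    · rw [hee, hCc]
      norm_num
      rw [show (-1:ℤ) = -(1:ℤ) by norm_num, gc_neg]
      norm_num
      rw [show (2:ℤ) = ((2:ℕ):ℤ) by norm_num, gc_eval 2 2 1 (by decide)]
      norm_num
  · have hz : ee 1 k = 0 := by
      rw [hee, show ((k:ℤ) - 3) = ((k - 3 : ℕ):ℤ) by omega, gc_cast,
        Nat.choose_eq_zero_of_lt (by omega)]
      norm_num
    rw [hz]
    refine ⟨le_refl 0, ?_⟩
    rw [hCc]
    exact gc_nonneg (by positivity) _

lemma Cc_step1 (m : ℕ) : Cc (m+1) (m+3) = genChoose (lam (m+1) + 1) 2 := by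
  rw [Cc]
  have h1 : (m+3) - (m+1) = 2 := by omega
  rw [h1]
  congr 1
  push_cast
  ring

lemma Cc_step2 (m : ℕ) : Cc m (m+3) = genChoose (lam m + 2) 3 := by
  rw [Cc]
  have h1 : (m+3) - m = 3 := by omega
  rw [h1]
  congr 1
  push_cast
  ring

/-- bounds for lam (m+2) -/
lemma lam_bounds (m : ℕ) (hm : 1 ≤ m) (hPm : Pp m) (hPm1 : Pp (m+1)) :
    1 + genChoose (lam (m+1) + 1) 2 - genChoose (lam m + 2) 3 ≤ lam (m+2) ∧
    lam (m+2) ≤ 1 + genChoose (lam (m+1) + 1) 2 := by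
  have hdiag : ee (m+2) (m+3) = lam (m+2) - 1 := ee_diag_succ (m+1)
  have hrec : ee (m+2) (m+3) = Cc (m+1) (m+3) - ee (m+1) (m+3) := ee_succ (m+1) (m+3)
  have hrec2 : ee (m+1) (m+3) = Cc m (m+3) - ee m (m+3) := ee_succ m (m+3)
  have h1 : 0 ≤ ee (m+1) (m+3) := (hPm1 (m+3) (by omega)).1
  have h2 : 0 ≤ ee m (m+3) := (hPm (m+3) (by omega)).1
  rw [Cc_step1] at hrec
  rw [Cc_step2] at hrec2
  constructor
  · have : ee (m+1) (m+3) ≤ genChoose (lam m + 2) 3 := by linarith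
    linarith
  · linarith

def Theta (m : ℕ) : Prop :=
  Pp m ∧ 2 ≤ lam m ∧ lam m + 2 ≤ lam (m+1) ∧
    genChoose (lam m + 2) 3 ≤ genChoose (lam (m+1) + 1) 2 ∧
    (4 ≤ m → 14 ≤ lam m ∧ (lam m)^2 ≤ 4 * lam (m+1))

lemma theta_one : Theta 1 := by
  refine ⟨Pp_one, ?_, ?_, ?_, by omega⟩
  · rw [lam_one]
  · rw [lam_one, lam_two]; norm_num
  · rw [lam_one, lam_two]
    norm_num
    rw [show (4:ℤ) = ((4:ℕ):ℤ) by norm_num, show (5:ℤ) = ((5:ℕ):ℤ) by norm_num,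
      gc_eval 4 3 4 (by decide), gc_eval 5 2 10 (by decide)]
    norm_num

lemma theta_step (m : ℕ) (hm : 1 ≤ m) (ht : Theta m) : Theta (m+1) := by
  obtain ⟨hP, hb, hc, hd, he⟩ := ht
  have hP1 : Pp (m+1) :=
    Pp_step m hm hP (by linarith) (by linarith) (by linarith) hd
  have hlb := lam_bounds m hm hP hP1
  rcases Nat.lt_or_ge m 4 with hm4 | hm4
  · -- m ∈ {1,2,3}: everything explicit
    interval_cases m
    · refine ⟨hP1, ?_, ?_, ?_, by omega⟩
      · rw [lam_two]; norm_num
      · rw [lam_two, lam_three]; norm_num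
      · rw [lam_two, lam_three]
        norm_num
        rw [show (6:ℤ) = ((6:ℕ):ℤ) by norm_num, show (8:ℤ) = ((8:ℕ):ℤ) by norm_num,
          gc_eval 6 3 20 (by decide), gc_eval 8 2 28 (by decide)]
        norm_num
    · refine ⟨hP1, ?_, ?_, ?_, by omega⟩
      · rw [lam_three]; norm_num
      · rw [lam_three, lam_four]; norm_num
      · rw [lam_three, lam_four]
        norm_num
        rw [show (9:ℤ) = ((9:ℕ):ℤ) by norm_num, show (15:ℤ) = ((15:ℕ):ℤ) by norm_num,
          gc_eval 9 3 84 (by decide), gc_eval 15 2 105 (by decide)]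
        norm_num
    · refine ⟨hP1, ?_, ?_, ?_, ?_⟩
      · rw [lam_four]; norm_num
      · rw [lam_four, lam_five]; norm_num
      · rw [lam_four, lam_five]
        norm_num
        rw [show (16:ℤ) = ((16:ℕ):ℤ) by norm_num, show (52:ℤ) = ((52:ℕ):ℤ) by norm_num,
          gc_eval 16 3 560 (by decide), gc_eval 52 2 1326 (by decide)]
        norm_num
      · intro _
        rw [lam_four, lam_five]
        norm_num
  · -- m ≥ 4: asymptotic regime
    obtain ⟨hp14, hgrow⟩ := he hm4
    have hnum3 := num3 hp14 hgrow hlb.1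
    have hnum2 := num2 hp14 hgrow hlb.1
    refine ⟨hP1, by linarith, by linarith [hnum3.2], hnum2, ?_⟩
    intro _
    exact ⟨by linarith, hnum3.1⟩

lemma theta_all (m : ℕ) (hm : 1 ≤ m) : Theta m := by
  induction m with
  | zero => omega
  | succ M ih =>
      rcases Nat.eq_zero_or_pos M with h | h
      · subst h; exact theta_one
      · exact theta_step M h (ih h)

theorem lam_gap (i : ℕ) : lam i + 1 < lam (i + 1) := by
  rcases Nat.eq_zero_or_pos i with h | h
  · subst h
    rw [lam_zero, lam_one]
    norm_num
  · have := (theta_all i h).2.2.1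
    omega


end GC

/-- There is a strictly increasing integer sequence `λ` with
`λ 0 = -2`, `λ 1 = 2` and `λ (i+1) > λ i + 1` for all `i`, such that for every
`m ≥ 1` and every integer `t`,
`C(t,m) + 3·C(t,m-1) = ∑_{i=0}^{m-1} C(t - λ i, m - i) + 1`
(generalized binomial coefficients). -/
theorem exists_lambda_sequence :
    ∃ lam : ℕ → ℤ, StrictMono lam ∧ lam 0 = -2 ∧ lam 1 = 2 ∧
      (∀ i : ℕ, lam i + 1 < lam (i + 1)) ∧
      ∀ m : ℕ, 1 ≤ m → ∀ t : ℤ,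
        genChoose t m + 3 * genChoose t (m - 1) =
          (∑ i ∈ Finset.range m, genChoose (t - lam i) (m - i)) + 1 := by
  refine ⟨GC.lam, ?_, GC.lam_zero, GC.lam_one, ?_, ?_⟩
  · apply strictMono_nat_of_lt_succ
    intro n
    have := GC.lam_gap n
    omega
  · exact GC.lam_gap
  · intro m hm t
    exact GC.main_identity m hm t
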